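/- Let L be a field with an additive valuation v, let q > 1 be a real number, and let φ : L → L be a ring endomorphism with v(φ(x)) = q · v(x) for all x ∈ L. Let m, n ≥ 1 be integers, let C be a real number, let Δ be an n × n matrix of formal power series over L all of whose coefficients c satisfy v(c) ≥ C, and let f = (f_1, …, f_n) be a vector of formal power series over L satisfying the semilinear system f_i^{φ^m} = ∑_{j=1}^n Δ_{ij} · f_j for all i, where f^{φ^m} denotes the series obtained by applying φ^m to every coefficient. Then every coefficient c of every f_i satisfies v(c) ≥ C / (q^m − 1). -/

import Mathlib

theorem aux_sum_min {L : Type*} [Field L] (v : L → EReal)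
    (hv0 : v 0 = ⊤)
    (hv_add : ∀ x y : L, min (v x) (v y) ≤ v (x + y))
    {ι : Type*} (s : Finset ι) (g : ι → L) (b : EReal)
    (h : ∀ j ∈ s, b ≤ v (g j)) : b ≤ v (∑ j ∈ s, g j) := by
  classical
  induction s using Finset.cons_induction with
  | empty => simp [hv0]
  | cons a s ha ih =>
    rw [Finset.sum_cons]
    refine le_trans (le_min (h a (by simp)) (ih fun j hj => h j (by simp [hj]))) (hv_add _ _)



/-- **Valuation bound for solutions of semilinear systems over power series.**
Let `L` be a field with an additive valuation `v`, `q > 1` real, and `φ : L → L` a ring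
endomorphism with `v (φ x) = q * v x`.  Let `Δ` be an `n × n` matrix of power series all of
whose coefficients `c` satisfy `v c ≥ C`, and let `f = (f_1, …, f_n)` be power series with
`f_i^{φ^m} = ∑_j Δ_{i j} * f_j` for all `i` (where `φ^m` is applied to every coefficient).
Then every coefficient `c` of every `f_i` satisfies `v c ≥ C / (q^m - 1)`. -/
theorem stmt3 {L : Type*} [Field L] (v : L → EReal)
    (hv_top : ∀ x : L, v x = ⊤ ↔ x = 0)
    (hv_bot : ∀ x : L, v x ≠ ⊥)
    (hv_mul : ∀ x y : L, v (x * y) = v x + v y)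
    (hv_add : ∀ x y : L, min (v x) (v y) ≤ v (x + y))
    (q : ℝ) (hq : 1 < q) (φ : L →+* L)
    (hφ : ∀ x : L, v (φ x) = (q : EReal) * v x)
    (m n : ℕ) (hm : 1 ≤ m) (hn : 1 ≤ n) (C : ℝ)
    (Δ : Matrix (Fin n) (Fin n) (PowerSeries L))
    (hΔ : ∀ (i j : Fin n) (k : ℕ), ((C : ℝ) : EReal) ≤ v (PowerSeries.coeff k (Δ i j)))
    (f : Fin n → PowerSeries L)
    (hf : ∀ (i : Fin n) (k : ℕ),
      (⇑φ)^[m] (PowerSeries.coeff k (f i)) =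
        PowerSeries.coeff k (∑ j : Fin n, Δ i j * f j)) :
    ∀ (i : Fin n) (k : ℕ),
      ((C / (q ^ m - 1) : ℝ) : EReal) ≤ v (PowerSeries.coeff k (f i)) := by
  classical
  have hv0 : v 0 = ⊤ := (hv_top 0).mpr rfl
  have hiter : ∀ (k : ℕ) (x : L), v ((⇑φ)^[k] x) = ((q^k : ℝ) : EReal) * v x := by
    intro k
    induction k with
    | zero => intro x; simp
    | succ k ih =>
      intro x
      rw [Function.iterate_succ_apply', hφ, ih, ← mul_assoc]
      congr 1
      push_cast
      rw [pow_succ, mul_comm]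
  have hqm : (1:ℝ) < q ^ m := one_lt_pow₀ hq (by omega)
  have hpos : (0:ℝ) < q ^ m - 1 := by linarith
  intro i k
  haveI : Nonempty (Fin n) := ⟨⟨0, hn⟩⟩
  have hne : (Finset.univ : Finset (Fin n × Fin (k+1))).Nonempty := Finset.univ_nonempty
  set b : EReal := Finset.univ.inf' hne
    (fun p : Fin n × Fin (k+1) => v (PowerSeries.coeff p.2 (f p.1))) with hb
  have hble : ∀ (i' : Fin n) (k' : ℕ), k' ≤ k → b ≤ v (PowerSeries.coeff k' (f i')) := by
    intro i' k' hk'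
    have h1 : b ≤ v (PowerSeries.coeff ((⟨k', by omega⟩ : Fin (k+1)) : ℕ) (f i')) :=
      Finset.inf'_le _ (Finset.mem_univ ((i', ⟨k', by omega⟩) : Fin n × Fin (k+1)))
    exact h1
  have key : ∀ (i' : Fin n) (k' : ℕ), k' ≤ k →
      (C : EReal) + b ≤ ((q^m : ℝ) : EReal) * v (PowerSeries.coeff k' (f i')) := by
    intro i' k' hk'
    rw [← hiter m, hf i' k', map_sum]
    refine aux_sum_min v hv0 hv_add _ _ _ ?_
    intro j _
    rw [PowerSeries.coeff_mul]
    refine aux_sum_min v hv0 hv_add _ _ _ ?_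
    intro p hp
    rw [hv_mul]
    have hp2 : p.2 ≤ k := by
      have := Finset.HasAntidiagonal.mem_antidiagonal.mp hp
      omega
    exact add_le_add (hΔ i' j p.1) (hble j p.2 hp2)
  obtain ⟨p₀, -, hp₀⟩ := Finset.exists_mem_eq_inf' hne
    (fun p : Fin n × Fin (k+1) => v (PowerSeries.coeff p.2 (f p.1)))
  have hbbot : b ≠ ⊥ := by rw [hb, hp₀]; exact hv_bot _
  have hkey : (C : EReal) + b ≤ ((q^m : ℝ) : EReal) * b := by
    have h1 := key p₀.1 p₀.2 (Nat.lt_succ_iff.mp p₀.2.isLt)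
    rw [← hp₀] at h1
    exact h1
  rcases eq_or_ne b ⊤ with htop | hbtop
  · have := hble i k le_rfl
    rw [htop] at this
    exact le_trans le_top this
  · have hbr : b = ((b.toReal : ℝ) : EReal) := (EReal.coe_toReal hbtop hbbot).symm
    set r := b.toReal
    rw [hbr] at hkey
    have hCr' : C + r ≤ q^m * r := by exact_mod_cast hkey
    have hgoal : C / (q^m - 1) ≤ r := by
      rw [div_le_iff₀ hpos]; linarith
    refine le_trans ?_ (hble i k le_rfl)
    rw [hbr]
    exact_mod_cast hgoal
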